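/- Let (K, v) be a Henselian discrete valued field with char(K) = 0 and char(K̂) = p > 0. If β₁ ∈ K satisfies v(β₁ − 1) > 0, β₁′ ∈ K, and v(β₁ − β₁′) > p·v(p)/(p − 1), then v(β₁′ − 1) > 0 and β₁·β₁′^{-1} ∈ K^{*p}. -/

import Mathlib

noncomputable section

open IsLocalRing

local notation "ℤᵐ⁰" => WithZero (Multiplicative ℤ)

/-- The value group of a valuation on a field `K`, as a subgroup of the units of the
value monoid: the subgroup generated by the values of nonzero elements of `K`. -/
def valGroup {K Γ : Type*} [Field K] [LinearOrderedCommGroupWithZero Γ]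
    (v : Valuation K Γ) : Subgroup Γˣ :=
  Subgroup.closure { g : Γˣ | ∃ x : K, x ≠ 0 ∧ v x = ↑g }

/-- The subfield of `p`-th powers of a field `k` (for `k` of characteristic `p` this is
the image of the Frobenius). -/
def pthPowers (k : Type*) [Field k] (p : ℕ) : Subfield k :=
  Subfield.closure { y : k | ∃ x : k, x ^ p = y }

/-- Let `(K, v)` be a Henselian discrete valued field of mixed
characteristic `(0, p)`.  If `v(β₁ − 1) > 0` (multiplicatively `< 1`) and
`v(β₁ − β₁′) > p·v(p)/(p−1)` (multiplicatively `v (β₁ - β₁′) ^ (p - 1) < v(p) ^ p`),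
then `v(β₁′ − 1) > 0` and `β₁·β₁′⁻¹` is a `p`-th power in `K^{*}`. -/
theorem congruent_units_pth_power_ratio
    {K : Type} [Field K]
    (p : ℕ) (hp : p.Prime)
    (v : Valuation K ℤᵐ⁰)
    (hdisc : Function.Surjective v)
    (hhens : HenselianLocalRing v.integer)
    [CharZero K]
    (hres : CharP (IsLocalRing.ResidueField v.integer) p)
    (β β' : K) (hβ : v (β - 1) < 1)
    (hclose : v (β - β') ^ (p - 1) < v (p : K) ^ p) :
    v (β' - 1) < 1 ∧ ∃ z : K, z ≠ 0 ∧ β = β' * z ^ p := by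
  haveI := hhens
  have hI := Valuation.integer.integers (v := v)
  have hp2 := hp.two_le
  -- membership in the maximal ideal is valuation < 1
  have hmem : ∀ x : v.integer, x ∈ IsLocalRing.maximalIdeal v.integer ↔ v (x : K) < 1 := by
    intro x
    rw [IsLocalRing.mem_maximalIdeal, mem_nonunits_iff, hI.isUnit_iff_valuation_eq_one]
    have h1 := hI.map_le_one x
    exact ⟨fun h => lt_of_le_of_ne h1 h, fun h => ne_of_lt h⟩
  -- basic facts about p
  have hpK : (p : K) ≠ 0 := Nat.cast_ne_zero.mpr hp.ne_zero
  have hvp0 : v (p : K) ≠ 0 := by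
    rw [Valuation.ne_zero_iff]; exact hpK
  have hvppos : (0 : ℤᵐ⁰) < v (p : K) := zero_lt_iff.mpr hvp0
  have hnat : ∀ m : ℕ, v (m : K) ≤ 1 := by
    intro m
    have h2 := (m : v.integer).2
    rw [Valuation.mem_integer_iff] at h2
    simpa using h2
  have hvp1 : v (p : K) < 1 := by
    have hres0 : (IsLocalRing.residue v.integer) (p : v.integer) = 0 := by
      rw [map_natCast]
      exact CharP.cast_eq_zero _ p
    have hmemp := (IsLocalRing.residue_eq_zero_iff _).mp hres0
    have := (hmem _).mp hmemp
    simpa using this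
  -- first claim
  have hsub1 : v (β - β') < 1 := by
    by_contra h
    push_neg at h
    have h1 : (1 : ℤᵐ⁰) ≤ v (β - β') ^ (p - 1) := one_le_pow_of_one_le' h _
    have h2 : v (p : K) ^ p < 1 := pow_lt_one' hvp1 (by omega)
    exact absurd (lt_trans (lt_of_le_of_lt h1 hclose) h2) (lt_irrefl _)
  have hβ'1 : v (β' - 1) < 1 := by
    have : β' - 1 = (β - 1) - (β - β') := by ring
    rw [this]
    exact lt_of_le_of_lt (v.map_sub _ _) (max_lt hβ hsub1)
  refine ⟨hβ'1, ?_⟩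
  -- setup
  have hvβ' : v β' = 1 := by
    have := v.map_one_add_of_lt hβ'1
    simpa using this
  have hβ'0 : β' ≠ 0 := by
    intro h; rw [h] at hvβ'; simp at hvβ'
  set t : K := β / β' - 1 with ht_def
  have hvt : v t = v (β - β') := by
    have h : t = (β - β') / β' := by rw [ht_def]; field_simp
    rw [h, map_div₀, hvβ', div_one]
  set c : K := t / (p : K) with hc_def
  have hpc : (p : K) * c = t := by
    rw [hc_def]; field_simp
  have hvc : v c = v t / v (p : K) := by rw [hc_def, map_div₀]
  -- key inequalities
  have hvtvp : v t < v (p : K) := by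
    by_contra h
    push_neg at h
    have h1 : v (p : K) ^ (p - 1) ≤ v t ^ (p - 1) := pow_le_pow_left' h _
    have h4 : v t ^ (p - 1) < v (p:K) ^ p := by rw [hvt]; exact hclose
    have h6 : v (p:K) ^ p ≤ v (p:K) ^ (p-1) := by
      have h3 : v (p:K) ^ p = v (p:K) ^ (p-1) * v (p:K) := by
        rw [← pow_succ]; congr 1; omega
      rw [h3]
      calc v (p:K) ^ (p-1) * v (p:K) ≤ v (p:K) ^ (p-1) * 1 := mul_le_mul_right (le_of_lt hvp1) _
      _ = v (p:K) ^ (p-1) := mul_one _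
    exact absurd (lt_of_lt_of_le (lt_of_le_of_lt h1 h4) h6) (lt_irrefl _)
  have hvc1 : v c < 1 := by
    rw [hvc, div_lt_iff₀ hvppos, one_mul]; exact hvtvp
  have hvcle : v c ≤ 1 := le_of_lt hvc1
  have hcp : v c ^ (p - 1) < v (p : K) := by
    rw [hvc, div_pow, div_lt_iff₀ (zero_lt_iff.mpr (pow_ne_zero _ hvp0))]
    calc v t ^ (p-1) < v (p:K) ^ p := by rw [hvt]; exact hclose
    _ = v (p:K) * v (p:K) ^ (p-1) := by rw [← pow_succ']; congr 1; omega
  -- the coefficients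
  set dK : ℕ → K := fun k => (p.choose k : K) / (p : K) * c ^ (k - 1) with hdK_def
  have hd1 : dK 1 = 1 := by
    simp [hdK_def, Nat.choose_one_right, div_self hpK]
  have hdint : ∀ k, 1 ≤ k → k ≤ p → v (dK k) ≤ 1 := by
    intro k hk1 hkp
    rcases eq_or_lt_of_le hkp with rfl | hklt
    · -- k = p
      simp only [hdK_def, Nat.choose_self, Nat.cast_one]
      rw [map_mul, map_div₀, map_one, map_pow]
      rw [one_div, ← div_eq_inv_mul, div_le_one₀ hvppos]
      exact le_of_lt hcp
    · obtain ⟨m, hm⟩ := hp.dvd_choose_self (by omega) hklt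
      have hch : (p.choose k : K) / (p : K) = (m : K) := by
        rw [hm]; push_cast; field_simp
      simp only [hdK_def]
      rw [hch, map_mul, map_pow]
      exact mul_le_one' (hnat m) (pow_le_one' hvcle _)
  have hdm : ∀ k, 2 ≤ k → k ≤ p → v (dK k) < 1 := by
    intro k hk2 hkp
    rcases eq_or_lt_of_le hkp with rfl | hklt
    · simp only [hdK_def, Nat.choose_self, Nat.cast_one]
      rw [map_mul, map_div₀, map_one, map_pow]
      rw [one_div, ← div_eq_inv_mul, div_lt_iff₀ hvppos, one_mul]
      exact hcp
    · obtain ⟨m, hm⟩ := hp.dvd_choose_self (by omega) hklt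
      have hch : (p.choose k : K) / (p : K) = (m : K) := by
        rw [hm]; push_cast; field_simp
      simp only [hdK_def]
      rw [hch, map_mul, map_pow]
      have hpow : v c ^ (k - 1) < 1 := by
        have : v c ^ (k - 1) = v c ^ (k - 2) * v c := by rw [← pow_succ]; congr 1; omega
        rw [this]
        calc v c ^ (k-2) * v c ≤ 1 * v c := by
              exact mul_le_mul' (pow_le_one' hvcle _) (le_refl _)
        _ = v c := one_mul _
        _ < 1 := hvc1
      calc v (m:K) * v c ^ (k-1) ≤ 1 * (v c ^ (k-1)) := by
            exact mul_le_mul' (hnat m) (le_refl _)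
      _ = v c ^ (k-1) := one_mul _
      _ < 1 := hpow
  -- coefficients as integers
  have hdint' : ∀ k ∈ Finset.Icc 1 p, dK k ∈ v.integer := by
    intro k hk
    simp only [Finset.mem_Icc] at hk
    rw [Valuation.mem_integer_iff]
    exact hdint k hk.1 hk.2
  let d : ℕ → v.integer := fun k =>
    if h : k ∈ Finset.Icc 1 p then ⟨dK k, hdint' k h⟩ else 0
  have hdk : ∀ k ∈ Finset.Icc 1 p, ((d k : v.integer) : K) = dK k := by
    intro k hk
    simp only [d, dif_pos hk]
  have hd1' : d 1 = 1 := by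
    have h1 : (1 : ℕ) ∈ Finset.Icc 1 p := by simp; omega
    apply Subtype.ext
    rw [hdk 1 h1, hd1]
    rfl
  -- the polynomial
  set G : Polynomial v.integer :=
    Polynomial.X ^ p - ∑ k ∈ Finset.Icc 1 p, Polynomial.C (d k) * Polynomial.X ^ (p - k)
    with hG_def
  have hGmonic : G.Monic := by
    apply Polynomial.monic_X_pow_sub
    apply lt_of_le_of_lt (Polynomial.degree_sum_le _ _)
    rw [Finset.sup_lt_iff (by exact_mod_cast WithBot.bot_lt_coe p)]
    intro k hk
    simp only [Finset.mem_Icc] at hk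
    apply lt_of_le_of_lt (Polynomial.degree_C_mul_X_pow_le _ _)
    exact_mod_cast (by omega : p - k < p)
  have hsplit : Finset.Icc 1 p = insert 1 (Finset.Icc 2 p) := by
    ext k; simp [Finset.mem_Icc]; omega
  have h1notin : (1 : ℕ) ∉ Finset.Icc 2 p := by simp
  have hdmem : ∀ k ∈ Finset.Icc 2 p, d k ∈ IsLocalRing.maximalIdeal v.integer := by
    intro k hk
    simp only [Finset.mem_Icc] at hk
    have hk1 : k ∈ Finset.Icc 1 p := by simp [Finset.mem_Icc]; omega
    rw [hmem, hdk k hk1]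
    exact hdm k hk.1 hk.2
  have hGeval : G.eval 1 ∈ IsLocalRing.maximalIdeal v.integer := by
    have heq : G.eval 1 = - ∑ k ∈ Finset.Icc 2 p, d k := by
      simp only [hG_def, Polynomial.eval_sub, Polynomial.eval_pow, Polynomial.eval_X, one_pow,
        Polynomial.eval_finset_sum, Polynomial.eval_mul, Polynomial.eval_C]
      rw [hsplit, Finset.sum_insert h1notin, hd1']
      ring
    rw [heq]
    exact neg_mem (Ideal.sum_mem _ hdmem)
  have hGderiv : IsUnit ((Polynomial.derivative G).eval 1) := by
    have hev : (Polynomial.derivative G).eval 1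
        = (p : v.integer) - ∑ k ∈ Finset.Icc 1 p, d k * ((p - k : ℕ) : v.integer) := by
      simp only [hG_def, map_sub, Polynomial.derivative_X_pow, Polynomial.derivative_sum,
        Polynomial.derivative_C_mul, Polynomial.eval_sub, Polynomial.eval_finset_sum,
        Polynomial.eval_mul, Polynomial.eval_C, Polynomial.eval_pow, Polynomial.eval_X, one_pow]
      ring
    rw [hev, hsplit, Finset.sum_insert h1notin, hd1', one_mul]
    have hcast : ((p - 1 : ℕ) : v.integer) = (p : v.integer) - 1 := by
      push_cast [Nat.cast_sub (by omega : 1 ≤ p)]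
      ring
    rw [hcast]
    have hform : (p : v.integer) - ((p : v.integer) - 1 + ∑ k ∈ Finset.Icc 2 p, d k * ((p - k : ℕ) : v.integer))
        = 1 - ∑ k ∈ Finset.Icc 2 p, d k * ((p - k : ℕ) : v.integer) := by ring
    rw [hform]
    have hSmem : (∑ k ∈ Finset.Icc 2 p, d k * ((p - k : ℕ) : v.integer))
        ∈ IsLocalRing.maximalIdeal v.integer :=
      Ideal.sum_mem _ fun k hk => Ideal.mul_mem_right _ _ (hdmem k hk)
    rw [← IsLocalRing.notMem_maximalIdeal]
    intro hmem1
    have h1mem : (1 : v.integer) ∈ IsLocalRing.maximalIdeal v.integer := by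
      have := add_mem hmem1 hSmem
      simpa using this
    exact (Ideal.ne_top_iff_one _).mp (IsLocalRing.maximalIdeal.isMaximal v.integer).ne_top h1mem
  -- apply Hensel's lemma
  obtain ⟨z, hzroot, hz1⟩ := hhens.is_henselian G hGmonic 1 hGeval hGderiv
  have hvz : v ((z : K) - 1) < 1 := by
    have := (hmem _).mp hz1
    simpa using this
  have hvz1 : v (z : K) = 1 := by
    have h := v.map_one_add_of_lt hvz
    have : (1 : K) + ((z:K) - 1) = (z : K) := by ring
    rwa [this] at h
  have hzK0 : (z : K) ≠ 0 := by
    intro h; rw [h] at hvz1; simp at hvz1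
  -- the root equation in K
  have hzeq : (z : K) ^ p = ∑ k ∈ Finset.Icc 1 p, dK k * (z : K) ^ (p - k) := by
    have h0 := Polynomial.eval₂_at_apply (p := G) (algebraMap v.integer K) z
    rw [hzroot] at h0
    simp only [map_zero] at h0
    rw [hG_def] at h0
    simp only [Polynomial.eval₂_sub, Polynomial.eval₂_finset_sum, Polynomial.eval₂_mul,
      Polynomial.eval₂_C, Polynomial.eval₂_X_pow, sub_eq_zero] at h0
    have h0' : (z : K) ^ p
        = ∑ k ∈ Finset.Icc 1 p, ((d k : v.integer) : K) * (z : K) ^ (p - k) := h0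
    rw [h0']
    exact Finset.sum_congr rfl fun k hk => by rw [hdk k hk]
  -- construct the p-th root
  set x : K := 1 + c / (z : K) with hx_def
  have hvcz : v (c / (z:K)) < 1 := by
    rw [map_div₀, hvz1, div_one]; exact hvc1
  have hvx : v x = 1 := v.map_one_add_of_lt hvcz
  have hx0 : x ≠ 0 := by
    intro h; rw [h] at hvx; simp at hvx
  -- compute x ^ p
  have hsum : ∀ k ∈ Finset.Icc 1 p,
      (c / (z:K)) ^ k * (p.choose k : K) * (z:K) ^ p
        = (p : K) * c * (dK k * (z:K) ^ (p - k)) := by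
    intro k hk
    simp only [Finset.mem_Icc] at hk
    have hzpow : (z:K) ^ p = (z:K) ^ k * (z:K) ^ (p - k) := by
      rw [← pow_add]; congr 1; omega
    have hcpow : c ^ k = c * c ^ (k - 1) := by
      rw [← pow_succ']; congr 1; omega
    rw [hzpow, div_pow, hcpow]
    simp only [hdK_def]
    field_simp
  have hxp' : x ^ p = 1 + ∑ k ∈ Finset.Icc 1 p, (c / (z:K)) ^ k * (p.choose k : K) := by
    rw [hx_def, add_comm (1:K), add_pow]
    have hr : Finset.range (p + 1) = insert 0 (Finset.Icc 1 p) := by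
      ext k; simp [Finset.mem_Icc, Finset.mem_range]; omega
    rw [hr, Finset.sum_insert (by simp)]
    simp only [pow_zero, one_pow, Nat.choose_zero_right, Nat.cast_one, one_mul, mul_one]
  have hkey : (x ^ p - 1) * (z:K) ^ p = t * (z:K) ^ p := by
    rw [hxp']
    have h1 : (1 + ∑ k ∈ Finset.Icc 1 p, (c / (z:K)) ^ k * (p.choose k : K) - 1)
        = ∑ k ∈ Finset.Icc 1 p, (c / (z:K)) ^ k * (p.choose k : K) := by ring
    rw [h1, Finset.sum_mul]
    rw [Finset.sum_congr rfl hsum, ← Finset.mul_sum, ← hzeq, hpc]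
  have hxp : x ^ p = 1 + t := by
    have := mul_right_cancel₀ (pow_ne_zero p hzK0) hkey
    linear_combination this
  refine ⟨x, hx0, ?_⟩
  rw [hxp, ht_def]
  field_simp
  ring
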